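/- There exist a constant C₉ and integers N, M such that every solution (n, m, n₁, m₁) of U_n − U_{n₁} = V_m − V_{m₁} with n > n₁ ≥ N₀, m > m₁ ≥ M₀, n ≥ N, m ≥ M satisfies n ≤ m·(log|β| / log|α|) + τ·(log m / log|α|) + C₉; here 0 < log|β|/log|α| < 1. Consequently there exists M₃ such that every such solution with m ≥ M₃ satisfies m > n. -/

import Mathlib

open Polynomial

/-- A linear recurrence sequence defined over the integers, together with the data of the
distinct roots of its characteristic polynomial and the polynomial coefficients in its
Binet-type representation `U n = ∑ i, aᵢ(n) · αᵢⁿ`. By convention the root with index `0`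
is the distinguished (dominant) one. -/
structure LinRecSeq where
  /-- the integer sequence -/
  U : ℕ → ℤ
  /-- the order of the recurrence -/
  k : ℕ
  kpos : 0 < k
  /-- the integer coefficients of the recurrence: `c i` stands for `c_{i+1}` -/
  c : Fin k → ℤ
  clast : c ⟨k - 1, by omega⟩ ≠ 0
  recur : ∀ n : ℕ, U (n + k) = ∑ i : Fin k, c i * U (n + (k - 1 - i.val))
  /-- the number of distinct roots of the characteristic polynomial -/
  t : ℕ
  tpos : 0 < t
  /-- the distinct complex roots of the characteristic polynomial -/
  root : Fin t → ℂ
  root_inj : Function.Injective root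
  /-- the multiplicities of the roots -/
  m : Fin t → ℕ
  mpos : ∀ i, 0 < m i
  char_eq : (X : ℂ[X]) ^ k - ∑ i : Fin k, C (c i : ℂ) * X ^ (k - 1 - i.val)
      = ∏ i : Fin t, (X - C (root i)) ^ m i
  /-- the polynomial coefficients `aᵢ` (nonzero, of degree `≤ σᵢ - 1`, with algebraic
  coefficients) -/
  a : Fin t → ℂ[X]
  a_ne : ∀ i, a i ≠ 0
  a_deg : ∀ i, (a i).natDegree ≤ m i - 1
  a_alg : ∀ i j, IsAlgebraic ℚ ((a i).coeff j)
  formula : ∀ n : ℕ, (U n : ℂ) = ∑ i : Fin t, (a i).eval (n : ℂ) * root i ^ n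

namespace LinRecSeq

variable (R : LinRecSeq)

/-- the distinguished index of the dominant root -/
def i0 : Fin R.t := ⟨0, R.tpos⟩

/-- `R` has dominant root `z` if `z` is the distinguished root and all other roots are
strictly smaller in absolute value. -/
def HasDomRoot (z : ℂ) : Prop :=
  R.root R.i0 = z ∧ ∀ i, i ≠ R.i0 → ‖R.root i‖ < ‖z‖

/-- the polynomial coefficient of the dominant root (denoted `a(n)` resp. `b(m)`) -/
noncomputable def domPoly : ℂ[X] := R.a R.i0

/-- the degree of the polynomial coefficient of the dominant root
(denoted `σ` resp. `τ`) -/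
noncomputable def domDeg : ℕ := R.domPoly.natDegree

end LinRecSeq

/-- Two nonzero complex numbers are multiplicatively independent if the only integers
`a, b` with `αᵃ βᵇ = 1` are `a = b = 0`. -/
def MultIndep (α β : ℂ) : Prop := ∀ a b : ℤ, α ^ a * β ^ b = 1 → a = 0 ∧ b = 0


open Filter

lemma polyBound (P : ℂ[X]) : ∃ C : ℝ, 0 ≤ C ∧ ∀ n : ℕ, 1 ≤ n →
    ‖P.eval (n : ℂ)‖ ≤ C * (n : ℝ) ^ P.natDegree := by
  refine ⟨∑ j ∈ Finset.range (P.natDegree + 1), ‖P.coeff j‖,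
    Finset.sum_nonneg fun j _ => (norm_nonneg _), fun n hn => ?_⟩
  rw [P.eval_eq_sum_range, Finset.sum_mul]
  refine (norm_sum_le _ _).trans (Finset.sum_le_sum fun j hj => ?_)
  rw [norm_mul, norm_pow, Complex.norm_natCast]
  have h1 : (1:ℝ) ≤ (n:ℝ) := by exact_mod_cast hn
  have := pow_le_pow_right₀ h1 (Nat.lt_succ_iff.mp (Finset.mem_range.mp hj))
  exact mul_le_mul_of_nonneg_left this (norm_nonneg _)

lemma polyDivTendsto (P : ℂ[X]) :
    Tendsto (fun n : ℕ => P.eval (n : ℂ) / (n : ℂ) ^ P.natDegree) atTop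
      (nhds P.leadingCoeff) := by
  set d := P.natDegree
  have hsmall : ∀ j, j < d → Tendsto (fun n : ℕ => (n : ℂ) ^ j / (n : ℂ) ^ d) atTop (nhds 0) := by
    intro j hj
    rw [tendsto_zero_iff_norm_tendsto_zero]
    apply squeeze_zero' (Eventually.of_forall fun n => norm_nonneg _)
    · filter_upwards [eventually_ge_atTop 1] with n hn
      have h1 : (1:ℝ) ≤ (n:ℝ) := by exact_mod_cast hn
      have h0 : (0:ℝ) < (n:ℝ) := lt_of_lt_of_le zero_lt_one h1
      show ‖(n : ℂ) ^ j / (n : ℂ) ^ d‖ ≤ (n:ℝ)⁻¹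
      rw [norm_div, norm_pow, norm_pow, Complex.norm_natCast]
      rw [div_le_iff₀ (by positivity)]
      rw [inv_mul_eq_div, le_div_iff₀ h0, ← pow_succ]
      exact pow_le_pow_right₀ h1 (by omega)
    · exact tendsto_inv_atTop_zero.comp tendsto_natCast_atTop_atTop
  have key : Tendsto (fun n : ℕ => P.coeff d +
      ∑ j ∈ Finset.range d, P.coeff j * ((n : ℂ) ^ j / (n : ℂ) ^ d)) atTop
      (nhds (P.coeff d)) := by
    have : Tendsto (fun n : ℕ =>
        ∑ j ∈ Finset.range d, P.coeff j * ((n : ℂ) ^ j / (n : ℂ) ^ d)) atTop (nhds 0) := by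
      have := tendsto_finset_sum (Finset.range d) (fun j hj =>
        (hsmall j (Finset.mem_range.mp hj)).const_mul (P.coeff j))
      simpa using this
    simpa using tendsto_const_nhds.add this
  rw [Polynomial.leadingCoeff]
  refine key.congr' ?_
  filter_upwards [eventually_ge_atTop 1] with n hn
  have hne : ((n : ℂ) ^ d) ≠ 0 := by
    apply pow_ne_zero; exact_mod_cast Nat.one_le_iff_ne_zero.mp hn
  rw [P.eval_eq_sum_range, Finset.sum_range_succ, add_div, Finset.sum_div]
  rw [mul_div_assoc, div_self hne, mul_one, add_comm]
  congr 1
  apply Finset.sum_congr rfl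
  intro j hj; rw [mul_div_assoc]

lemma domTendsto (R : LinRecSeq) (z : ℂ) (h : R.HasDomRoot z) (hz1 : 1 < ‖z‖) :
    Tendsto (fun n : ℕ => (R.U n : ℂ) / ((n : ℂ) ^ R.domDeg * z ^ n)) atTop
      (nhds R.domPoly.leadingCoeff) := by
  have hzne : z ≠ 0 := by
    intro h0; rw [h0] at hz1; simp at hz1; linarith
  set σ := R.domDeg with hσ
  set g : Fin R.t → ℕ → ℂ := fun i n => (R.a i).eval (n : ℂ) * R.root i ^ n /
    ((n : ℂ) ^ σ * z ^ n) with hg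
  have hform : ∀ n : ℕ, (R.U n : ℂ) / ((n : ℂ) ^ σ * z ^ n) = ∑ i : Fin R.t, g i n := by
    intro n
    rw [R.formula n, Finset.sum_div]
  have hlim : ∀ i : Fin R.t, Tendsto (g i) atTop
      (nhds (if i = R.i0 then R.domPoly.leadingCoeff else 0)) := by
    intro i
    by_cases hi : i = R.i0
    · subst hi
      rw [if_pos rfl]
      have heq : ∀ᶠ n : ℕ in atTop, (R.domPoly.eval (n:ℂ)) / (n : ℂ) ^ σ = g R.i0 n := by
        filter_upwards [eventually_ge_atTop 1] with n hn
        rw [hg]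
        simp only [h.1, LinRecSeq.domPoly]
        rw [mul_comm ((n:ℂ)^σ) (z^n), ← div_div, mul_div_assoc,
          div_self (pow_ne_zero _ hzne), mul_one]
      exact (polyDivTendsto R.domPoly).congr' heq
    · rw [if_neg hi]
      obtain ⟨C, hC0, hC⟩ := polyBound (R.a i)
      set r : ℝ := ‖R.root i‖ / ‖z‖ with hr
      have hr0 : 0 ≤ r := by positivity
      have hr1 : r < 1 := by
        rw [hr, div_lt_one (lt_trans zero_lt_one hz1)]
        exact h.2 i hi
      rw [tendsto_zero_iff_norm_tendsto_zero]
      apply squeeze_zero' (Eventually.of_forall fun n => norm_nonneg _)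
        (g := fun n : ℕ => C * ((n : ℝ) ^ (R.a i).natDegree * r ^ n))
      · filter_upwards [eventually_ge_atTop 1] with n hn
        have h1 : (1:ℝ) ≤ (n:ℝ) := by exact_mod_cast hn
        have h0 : (0:ℝ) < (n:ℝ) := lt_of_lt_of_le zero_lt_one h1
        have hzp : (0:ℝ) < ‖z‖ ^ n := by positivity
        show ‖g i n‖ ≤ _
        rw [hg]
        simp only
        rw [norm_div, norm_mul, norm_mul, norm_pow, norm_pow, norm_pow]
        simp only [Complex.norm_natCast]
        have hd : 1 * ‖z‖ ^ n ≤ (n:ℝ)^σ * ‖z‖ ^ n :=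
          mul_le_mul_of_nonneg_right (one_le_pow₀ h1) (le_of_lt hzp)
        rw [one_mul] at hd
        have hnum : ‖(R.a i).eval (n:ℂ)‖ * ‖R.root i‖ ^ n ≤
            (C * (n:ℝ) ^ (R.a i).natDegree) * ‖R.root i‖ ^ n :=
          mul_le_mul_of_nonneg_right (hC n hn) (by positivity)
        calc ‖(R.a i).eval (n:ℂ)‖ * ‖R.root i‖ ^ n /
              ((n:ℝ)^σ * ‖z‖ ^ n)
            ≤ (C * (n:ℝ) ^ (R.a i).natDegree) * ‖R.root i‖ ^ n /
              (‖z‖ ^ n) :=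
              div_le_div₀ (by positivity) hnum hzp hd
          _ = C * ((n : ℝ) ^ (R.a i).natDegree * r ^ n) := by
              rw [hr, div_pow]; ring
      · have := (tendsto_pow_const_mul_const_pow_of_lt_one
          (R.a i).natDegree hr0 hr1).const_mul C
        simpa using this
  have hsum := tendsto_finset_sum Finset.univ (fun i (_ : i ∈ Finset.univ) => hlim i)
  rw [Fintype.sum_ite_eq' R.i0 (fun _ => R.domPoly.leadingCoeff)] at hsum
  exact hsum.congr (fun n => (hform n).symm)

/-- **Comparison of indices.** There are a constant `C₉` and integers `N, M` such that
every solution `(n, m, n₁, m₁)` of `U n − U n₁ = V m − V m₁` with `n > n₁ ≥ N₀`,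
`m > m₁ ≥ M₀`, `n ≥ N`, `m ≥ M` satisfies
`n ≤ m·(log|β|/log|α|) + τ·(log m/log|α|) + C₉`, where `0 < log|β|/log|α| < 1`.
Consequently there is `M₃` such that every such solution with `m ≥ M₃` has `m > n`. -/
theorem index_comparison (Ru Rv : LinRecSeq) (α β : ℂ)
    (hU : Ru.HasDomRoot α) (hV : Rv.HasDomRoot β)
    (hindep : MultIndep α β)
    (hβ1 : 1 < ‖β‖) (hβα : ‖β‖ < ‖α‖)
    (N₀ M₀ : ℕ)
    (hUmono : ∀ n : ℕ, N₀ ≤ n → 0 < |Ru.U n| ∧ |Ru.U n| < |Ru.U (n + 1)|)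
    (hVmono : ∀ m : ℕ, M₀ ≤ m → 0 < |Rv.U m| ∧ |Rv.U m| < |Rv.U (m + 1)|) :
    0 < Real.log (‖β‖) / Real.log (‖α‖) ∧
    Real.log (‖β‖) / Real.log (‖α‖) < 1 ∧
    ∃ C₉ : ℝ, ∃ N M : ℕ,
      (∀ n m n₁ m₁ : ℕ, N₀ ≤ n₁ → n₁ < n → M₀ ≤ m₁ → m₁ < m → N ≤ n → M ≤ m →
        Ru.U n - Ru.U n₁ = Rv.U m - Rv.U m₁ →
        (n : ℝ) ≤ (m : ℝ) * (Real.log (‖β‖) / Real.log (‖α‖))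
          + (Rv.domDeg : ℝ) * (Real.log m / Real.log (‖α‖)) + C₉) ∧
      ∃ M₃ : ℕ, ∀ n m n₁ m₁ : ℕ, N₀ ≤ n₁ → n₁ < n → M₀ ≤ m₁ → m₁ < m → N ≤ n → M ≤ m →
        M₃ ≤ m → Ru.U n - Ru.U n₁ = Rv.U m - Rv.U m₁ → n < m := by
  have hA1 : 1 < ‖α‖ := hβ1.trans hβα
  set A := ‖α‖ with hAdef
  set B := ‖β‖ with hBdef
  have hA0 : (0:ℝ) < A := lt_trans zero_lt_one hA1
  have hB0 : (0:ℝ) < B := lt_trans zero_lt_one hβ1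
  set LA := Real.log A with hLAdef
  set LB := Real.log B with hLBdef
  have hLA0 : 0 < LA := Real.log_pos hA1
  have hLB0 : 0 < LB := Real.log_pos hβ1
  have hLBA : LB < LA := Real.log_lt_log hB0 hβα
  set θ := LB / LA with hθdef
  have hθ0 : 0 < θ := div_pos hLB0 hLA0
  have hθ1 : θ < 1 := (div_lt_one hLA0).mpr hLBA
  refine ⟨hθ0, hθ1, ?_⟩
  set σ := Ru.domDeg with hσdef
  set τ := Rv.domDeg with hτdef
  set Lu := ‖Ru.domPoly.leadingCoeff‖ with hLudef
  set Lv := ‖Rv.domPoly.leadingCoeff‖ with hLvdef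
  have hLu0 : 0 < Lu :=
    norm_pos_iff.mpr (Polynomial.leadingCoeff_ne_zero.mpr (Ru.a_ne Ru.i0))
  have hLv0 : 0 < Lv :=
    norm_pos_iff.mpr (Polynomial.leadingCoeff_ne_zero.mpr (Rv.a_ne Rv.i0))
  -- real-valued limits
  have hU2 : Tendsto (fun n : ℕ => |((Ru.U n : ℤ) : ℝ)| / ((n:ℝ) ^ σ * A ^ n))
      atTop (nhds Lu) := by
    have h1 := (continuous_norm.tendsto _).comp (domTendsto Ru α hU hA1)
    refine h1.congr fun n => ?_
    simp only [Function.comp_apply, norm_div, norm_mul, norm_pow, Complex.norm_natCast,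
      Complex.norm_intCast, hAdef, hσdef]
  have hV2 : Tendsto (fun m : ℕ => |((Rv.U m : ℤ) : ℝ)| / ((m:ℝ) ^ τ * B ^ m))
      atTop (nhds Lv) := by
    have h1 := (continuous_norm.tendsto _).comp (domTendsto Rv β hV hβ1)
    refine h1.congr fun n => ?_
    simp only [Function.comp_apply, norm_div, norm_mul, norm_pow, Complex.norm_natCast,
      Complex.norm_intCast, hBdef, hτdef]
  set ε := Lu * (A - 1) / (2 * (A + 1)) with hεdef
  have hε0 : 0 < ε := div_pos (mul_pos hLu0 (by linarith)) (by linarith)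
  have hεLu : ε < Lu := by
    rw [hεdef, div_lt_iff₀ (by linarith)]
    nlinarith
  set cU := Lu * (A - 1) / (2 * A) with hcUdef
  have hcU0 : 0 < cU := div_pos (mul_pos hLu0 (by linarith)) (by linarith)
  have hid : (Lu - ε) * A - (Lu + ε) = cU * A := by
    rw [hεdef, hcUdef]
    field_simp
    ring
  set CV := 2 * (Lv + 1) with hCVdef
  have hCV0 : 0 < CV := by positivity
  -- eventual bounds
  have hUev : ∀ᶠ n : ℕ in atTop,
      (Lu - ε) * ((n:ℝ) ^ σ * A ^ n) ≤ |((Ru.U n : ℤ) : ℝ)| ∧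
      |((Ru.U n : ℤ) : ℝ)| ≤ (Lu + ε) * ((n:ℝ) ^ σ * A ^ n) := by
    filter_upwards [hU2.eventually (eventually_gt_nhds (by linarith : Lu - ε < Lu)),
      hU2.eventually (eventually_lt_nhds (by linarith : Lu < Lu + ε)),
      eventually_ge_atTop 1] with n h1 h2 h3
    have hn0 : (0:ℝ) < (n:ℝ) ^ σ * A ^ n := by
      have : (0:ℝ) < (n:ℝ) := by exact_mod_cast h3
      positivity
    constructor
    · exact ((lt_div_iff₀ hn0).mp h1).le
    · exact ((div_lt_iff₀ hn0).mp h2).le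
  have hVev : ∀ᶠ m : ℕ in atTop,
      |((Rv.U m : ℤ) : ℝ)| ≤ (Lv + 1) * ((m:ℝ) ^ τ * B ^ m) := by
    filter_upwards [hV2.eventually (eventually_lt_nhds (by linarith : Lv < Lv + 1)),
      eventually_ge_atTop 1] with m h2 h3
    have hm0 : (0:ℝ) < (m:ℝ) ^ τ * B ^ m := by
      have : (0:ℝ) < (m:ℝ) := by exact_mod_cast h3
      positivity
    exact ((div_lt_iff₀ hm0).mp h2).le
  obtain ⟨N1, hN1⟩ := eventually_atTop.mp hUev
  obtain ⟨M1, hM1⟩ := eventually_atTop.mp hVev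
  -- monotonicity of |U| and |V|
  have hUm : ∀ p q : ℕ, N₀ ≤ p → p ≤ q → |Ru.U p| ≤ |Ru.U q| := by
    intro p q hp hpq
    induction q, hpq using Nat.le_induction with
    | base => exact le_refl _
    | succ q hq ih => exact ih.trans (hUmono q (hp.trans hq)).2.le
  have hVm : ∀ p q : ℕ, M₀ ≤ p → p ≤ q → |Rv.U p| ≤ |Rv.U q| := by
    intro p q hp hpq
    induction q, hpq using Nat.le_induction with
    | base => exact le_refl _
    | succ q hq ih => exact ih.trans (hVmono q (hp.trans hq)).2.le
  set C₉ := (Real.log CV - Real.log cU) / LA with hC₉def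
  refine ⟨C₉, N1 + 2, M1 + 1, ?_⟩
  have key : ∀ n m n₁ m₁ : ℕ, N₀ ≤ n₁ → n₁ < n → M₀ ≤ m₁ → m₁ < m →
      N1 + 2 ≤ n → M1 + 1 ≤ m → Ru.U n - Ru.U n₁ = Rv.U m - Rv.U m₁ →
      (n : ℝ) ≤ (m : ℝ) * θ + (τ : ℝ) * (Real.log m / LA) + C₉ := by
    intro n m n₁ m₁ hn₁ hn₁n hm₁ hm₁m hNn hMm heq
    obtain ⟨p, rfl⟩ : ∃ p, n = p + 1 := ⟨n - 1, by omega⟩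
    have hpN1 : N1 ≤ p := by omega
    have hp1 : (1:ℝ) ≤ (p:ℝ) := by exact_mod_cast (by omega : 1 ≤ p)
    -- lower bound for |U n - U n₁|
    have h_un := (hN1 (p + 1) (by omega)).1
    have h_up := (hN1 p hpN1).2
    have hmon : |((Ru.U n₁ : ℤ) : ℝ)| ≤ |((Ru.U p : ℤ) : ℝ)| := by
      have := hUm n₁ p hn₁ (by omega)
      rw [← Int.cast_abs, ← Int.cast_abs]
      exact_mod_cast this
    have hD : ((p:ℝ)) ^ σ ≤ ((p:ℝ) + 1) ^ σ :=
      pow_le_pow_left₀ (by linarith) (by linarith) σ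
    have hD1 : (1:ℝ) ≤ ((p:ℝ) + 1) ^ σ := one_le_pow₀ (by linarith)
    have hP0 : (0:ℝ) < A ^ p := by positivity
    have hcast : ((p + 1 : ℕ) : ℝ) = (p:ℝ) + 1 := by push_cast; ring
    rw [hcast] at h_un
    have hstep1 : (Lu + ε) * ((p:ℝ) ^ σ * A ^ p) ≤ (Lu + ε) * (((p:ℝ)+1) ^ σ * A ^ p) := by
      apply mul_le_mul_of_nonneg_left _ (by linarith)
      exact mul_le_mul_of_nonneg_right hD hP0.le
    have hstep2 : cU * A ^ (p+1) ≤
        (Lu - ε) * (((p:ℝ)+1) ^ σ * A ^ (p+1)) - (Lu + ε) * (((p:ℝ)+1) ^ σ * A ^ p) := by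
      have e1 : (Lu - ε) * (((p:ℝ)+1) ^ σ * A ^ (p+1)) - (Lu + ε) * (((p:ℝ)+1) ^ σ * A ^ p)
          = ((p:ℝ)+1) ^ σ * A ^ p * ((Lu - ε) * A - (Lu + ε)) := by
        rw [pow_succ]; ring
      rw [e1, hid, pow_succ]
      calc cU * (A ^ p * A) = 1 * (A ^ p * (cU * A)) := by ring
        _ ≤ ((p:ℝ)+1) ^ σ * (A ^ p * (cU * A)) := by
            apply mul_le_mul_of_nonneg_right hD1
            positivity
        _ = ((p:ℝ)+1) ^ σ * A ^ p * (cU * A) := by ring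
    have hlowU : cU * A ^ (p+1) ≤ |((Ru.U (p+1) : ℤ) : ℝ) - ((Ru.U n₁ : ℤ) : ℝ)| := by
      have habs : |((Ru.U (p+1) : ℤ) : ℝ)| - |((Ru.U n₁ : ℤ) : ℝ)| ≤
          |((Ru.U (p+1) : ℤ) : ℝ) - ((Ru.U n₁ : ℤ) : ℝ)| := abs_sub_abs_le_abs_sub _ _
      have hup' : |((Ru.U n₁ : ℤ) : ℝ)| ≤ (Lu + ε) * ((p:ℝ) ^ σ * A ^ p) :=
        hmon.trans h_up
      linarith
    -- upper bound for |V m - V m₁|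
    have hm1R : (1:ℝ) ≤ (m:ℝ) := by exact_mod_cast (by omega : 1 ≤ m)
    have h_vm := hM1 m (by omega)
    have hmonV : |((Rv.U m₁ : ℤ) : ℝ)| ≤ |((Rv.U m : ℤ) : ℝ)| := by
      have := hVm m₁ m hm₁ (by omega)
      rw [← Int.cast_abs, ← Int.cast_abs]
      exact_mod_cast this
    have hupV : |((Rv.U m : ℤ) : ℝ) - ((Rv.U m₁ : ℤ) : ℝ)| ≤ CV * ((m:ℝ) ^ τ * B ^ m) := by
      have h1 : |((Rv.U m : ℤ) : ℝ) - ((Rv.U m₁ : ℤ) : ℝ)| ≤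
          |((Rv.U m : ℤ) : ℝ)| + |((Rv.U m₁ : ℤ) : ℝ)| := abs_sub _ _
      rw [hCVdef]
      linarith
    -- combine via the equation
    have heqR : ((Ru.U (p+1) : ℤ) : ℝ) - ((Ru.U n₁ : ℤ) : ℝ)
        = ((Rv.U m : ℤ) : ℝ) - ((Rv.U m₁ : ℤ) : ℝ) := by
      have : ((Ru.U (p+1) - Ru.U n₁ : ℤ) : ℝ) = ((Rv.U m - Rv.U m₁ : ℤ) : ℝ) := by
        exact_mod_cast congrArg (fun x : ℤ => (x : ℝ)) heq
      push_cast at this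
      linarith
    have hchain : cU * A ^ (p+1) ≤ CV * ((m:ℝ) ^ τ * B ^ m) := by
      rw [heqR] at hlowU
      linarith
    -- take logarithms
    have hmpos : (0:ℝ) < (m:ℝ) := by linarith
    have hlog : Real.log (cU * A ^ (p+1)) ≤ Real.log (CV * ((m:ℝ) ^ τ * B ^ m)) :=
      (Real.log_le_log_iff (by positivity) (by positivity)).mpr hchain
    have e1 : Real.log (cU * A ^ (p+1)) = Real.log cU + ((p+1 : ℕ) : ℝ) * LA := by
      rw [hLAdef, Real.log_mul hcU0.ne' (pow_ne_zero _ hA0.ne'), Real.log_pow]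
    have e2 : Real.log (CV * ((m:ℝ) ^ τ * B ^ m))
        = Real.log CV + ((τ:ℝ) * Real.log (m:ℝ) + (m:ℝ) * LB) := by
      rw [hLBdef, Real.log_mul hCV0.ne' (mul_ne_zero (pow_ne_zero _ hmpos.ne')
        (pow_ne_zero _ hB0.ne')), Real.log_mul (pow_ne_zero _ hmpos.ne')
        (pow_ne_zero _ hB0.ne'), Real.log_pow, Real.log_pow]
    rw [e1, e2] at hlog
    have h2 : ((p+1 : ℕ) : ℝ) * LA ≤ (m:ℝ) * LB + (τ:ℝ) * Real.log m
        + (Real.log CV - Real.log cU) := by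
      push_cast
      push_cast at hlog
      linarith
    have h3 : ((p+1 : ℕ) : ℝ) ≤ ((m:ℝ) * LB + (τ:ℝ) * Real.log m
        + (Real.log CV - Real.log cU)) / LA := (le_div_iff₀ hLA0).mpr h2
    have h4 : ((m:ℝ) * LB + (τ:ℝ) * Real.log m + (Real.log CV - Real.log cU)) / LA
        = (m:ℝ) * θ + (τ:ℝ) * (Real.log m / LA) + C₉ := by
      rw [hC₉def, hθdef]; ring
    rw [h4] at h3
    exact h3
  refine ⟨fun n m n₁ m₁ h1 h2 h3 h4 h5 h6 h7 => key n m n₁ m₁ h1 h2 h3 h4 h5 h6 h7, ?_⟩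
  -- second part
  set δ := 1 - θ with hδdef
  have hδ0 : 0 < δ := by rw [hδdef]; linarith
  have hlog0 : Tendsto (fun m : ℕ => Real.log m / (m:ℝ)) atTop (nhds 0) := by
    have h1 := Real.isLittleO_log_id_atTop.tendsto_div_nhds_zero
    exact h1.comp tendsto_natCast_atTop_atTop
  set κ := δ / 2 * (LA / ((τ:ℝ) + 1)) with hκdef
  have hκ0 : 0 < κ := by
    apply mul_pos (by linarith)
    positivity
  have hκid : ((τ:ℝ) + 1) * κ = δ / 2 * LA := by
    rw [hκdef]; field_simp
  have hev1 : ∀ᶠ m : ℕ in atTop, Real.log m / (m:ℝ) < κ :=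
    hlog0.eventually (eventually_lt_nhds hκ0)
  have hev2 : ∀ᶠ m : ℕ in atTop, C₉ < δ / 2 * (m:ℝ) := by
    have h1 : Tendsto (fun m : ℕ => δ / 2 * (m:ℝ)) atTop atTop :=
      (tendsto_natCast_atTop_atTop).const_mul_atTop (by linarith)
    exact h1.eventually_gt_atTop C₉
  have hev : ∀ᶠ m : ℕ in atTop,
      (m:ℝ) * θ + (τ:ℝ) * (Real.log m / LA) + C₉ < (m:ℝ) := by
    filter_upwards [hev1, hev2, eventually_ge_atTop 1] with m hm1 hm2 hm3
    have hm0 : (0:ℝ) < (m:ℝ) := by exact_mod_cast Nat.lt_of_lt_of_le Nat.zero_lt_one hm3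
    have hlogpos : 0 ≤ Real.log m := Real.log_nonneg (by exact_mod_cast hm3)
    have hm1' : Real.log m < κ * (m:ℝ) := (div_lt_iff₀ hm0).mp hm1
    have h3 : (τ:ℝ) * (Real.log m / LA) ≤ δ / 2 * (m:ℝ) := by
      calc (τ:ℝ) * (Real.log m / LA) ≤ ((τ:ℝ) + 1) * (Real.log m / LA) := by
            apply mul_le_mul_of_nonneg_right (by linarith)
            exact div_nonneg hlogpos hLA0.le
        _ ≤ ((τ:ℝ) + 1) * ((κ * (m:ℝ)) / LA) := by
            gcongr
        _ = (((τ:ℝ) + 1) * κ) * (m:ℝ) / LA := by ring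
        _ = δ / 2 * (m:ℝ) := by rw [hκid]; field_simp
    have : θ = 1 - δ := by rw [hδdef]; ring
    rw [this]
    linarith
  obtain ⟨M₃, hM₃⟩ := eventually_atTop.mp hev
  refine ⟨M₃, fun n m n₁ m₁ h1 h2 h3 h4 h5 h6 h7 h8 => ?_⟩
  have hk := key n m n₁ m₁ h1 h2 h3 h4 h5 h6 h8
  have hm := hM₃ m h7
  have : (n:ℝ) < (m:ℝ) := lt_of_le_of_lt hk hm
  exact_mod_cast this
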